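/- Let d ≥ 2 and let (q_n)_{n≥1} be a sequence in [0,1]. Let (N_n)_{n≥0} be a Markov chain adapted to a filtration (F_n) with N_0 = 0 and such that, conditionally on F_n, the increment N_{n+1} − N_n has the Binomial(d·N_n + d + 1, q_{n+1}) distribution. Then M_n := (N_n + (d+1)/d) · Π_{i=1}^n (1 + d·q_i)^{−1} is a nonnegative martingale with respect to (F_n), and consequently N_n · Π_{i=1}^n (1 + d·q_i)^{−1} converges almost surely to a nonnegative random variable ξ. -/

import Mathlib

open MeasureTheory ProbabilityTheory Filter
open scoped ENNReal NNReal


lemma ean_binom_sum (m K : ℕ) (hmK : m ≤ K) (p : ℝ) :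
    ∑ k ∈ Finset.range (K + 1), ((m.choose k : ℝ) * p ^ k * (1 - p) ^ (m - k)) = 1 := by
  rw [← Finset.sum_subset (Finset.range_subset_range.2 (by omega) :
      Finset.range (m+1) ⊆ Finset.range (K+1))]
  · have h := add_pow p (1 - p) m
    simp only [add_sub_cancel, one_pow] at h
    rw [show ∑ k ∈ Finset.range (m+1), ((m.choose k : ℝ) * p ^ k * (1 - p) ^ (m - k))
        = ∑ k ∈ Finset.range (m+1), (p ^ k * (1 - p) ^ (m - k) * (m.choose k : ℝ)) from
      Finset.sum_congr rfl fun k _ => by ring]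
    exact h.symm
  · intro k _ hk
    simp only [Finset.mem_range, not_lt] at hk
    rw [Nat.choose_eq_zero_of_lt (by omega)]
    simp

lemma ean_binom_mean (m K : ℕ) (hmK : m ≤ K) (p : ℝ) :
    ∑ k ∈ Finset.range (K + 1), ((k : ℝ) * ((m.choose k : ℝ) * p ^ k * (1 - p) ^ (m - k)))
      = m * p := by
  rw [← Finset.sum_subset (Finset.range_subset_range.2 (by omega) :
      Finset.range (m+1) ⊆ Finset.range (K+1))]
  · match m with
    | 0 => simp
    | m' + 1 =>
      rw [Finset.sum_range_succ']
      simp only [Nat.cast_zero, zero_mul, add_zero]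
      have key : ∀ j : ℕ, ((j+1 : ℕ) : ℝ) * (((m'+1).choose (j+1) : ℝ) * p ^ (j+1) * (1-p) ^ (m'+1-(j+1)))
          = ((m'+1 : ℕ) : ℝ) * p * ((m'.choose j : ℝ) * p ^ j * (1-p) ^ (m'-j)) := by
        intro j
        have hc : ((j+1 : ℕ) : ℝ) * (((m'+1).choose (j+1)) : ℝ) = ((m'+1 : ℕ) : ℝ) * (m'.choose j : ℝ) := by
          rw [← Nat.cast_mul, ← Nat.cast_mul]
          congr 1
          have h := Nat.add_one_mul_choose_eq m' j
          rw [mul_comm]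
          exact h.symm
        have hsub : m' + 1 - (j + 1) = m' - j := by omega
        rw [hsub, pow_succ]
        calc ((j+1 : ℕ) : ℝ) * (((m'+1).choose (j+1) : ℝ) * (p ^ j * p) * (1-p) ^ (m'-j))
            = (((j+1 : ℕ) : ℝ) * (((m'+1).choose (j+1)) : ℝ)) * (p ^ j * p * (1-p) ^ (m'-j)) := by ring
          _ = (((m'+1 : ℕ) : ℝ) * (m'.choose j : ℝ)) * (p ^ j * p * (1-p) ^ (m'-j)) := by rw [hc]
          _ = ((m'+1 : ℕ) : ℝ) * p * ((m'.choose j : ℝ) * p ^ j * (1-p) ^ (m'-j)) := by ring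
      calc ∑ k ∈ Finset.range (m' + 1), ((k+1 : ℕ) : ℝ) * (((m'+1).choose (k+1) : ℝ) * p ^ (k+1) * (1-p) ^ (m'+1-(k+1)))
          = ∑ k ∈ Finset.range (m' + 1), ((m'+1 : ℕ) : ℝ) * p * ((m'.choose k : ℝ) * p ^ k * (1-p) ^ (m'-k)) := by
            exact Finset.sum_congr rfl fun k _ => key k
        _ = ((m'+1 : ℕ) : ℝ) * p * ∑ k ∈ Finset.range (m' + 1), ((m'.choose k : ℝ) * p ^ k * (1-p) ^ (m'-k)) := by
            rw [Finset.mul_sum]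
        _ = ((m'+1 : ℕ) : ℝ) * p := by rw [ean_binom_sum m' m' le_rfl p, mul_one]
  · intro k _ hk
    simp only [Finset.mem_range, not_lt] at hk
    rw [Nat.choose_eq_zero_of_lt (by omega)]
    simp

lemma ean_step {Ω : Type*} {m0 : MeasurableSpace Ω} (P : Measure Ω) [IsProbabilityMeasure P]
    (F : Filtration ℕ m0) (d : ℕ) (q' : ℝ)
    (X Y : Ω → ℕ) (n : ℕ)
    (hX : Measurable[F n] X) (hY : Measurable Y)
    (B : ℕ) (hB : ∀ᵐ ω ∂P, X ω ≤ B)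
    (hbinom : ∀ k : ℕ,
      (P[Set.indicator {ω' | Y ω' = X ω' + k} (1 : Ω → ℝ) | F n]) =ᵐ[P]
        fun ω => (((d * X ω + d + 1).choose k : ℕ) : ℝ) * q' ^ k *
          (1 - q') ^ (d * X ω + d + 1 - k)) :
    (∀ᵐ ω ∂P, Y ω ≤ (d + 1) * B + d + 1) ∧
    (P[(fun ω => (Y ω : ℝ)) | F n] =ᵐ[P]
      fun ω => (X ω : ℝ) + ((d : ℝ) * X ω + d + 1) * q') := by
  have hm : F n ≤ m0 := F.le n
  have hXm : Measurable X := hX.mono hm le_rfl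
  set K : ℕ := d * B + d + 1 with hK
  set A : ℕ → Set Ω := fun k => {ω | Y ω = X ω + k} with hA_def
  have hA : ∀ k, MeasurableSet (A k) := fun k =>
    measurableSet_eq_fun hY (hXm.add measurable_const)
  set g : ℕ → Ω → ℝ := fun k => (A k).indicator (1 : Ω → ℝ) with hg_def
  have hg01 : ∀ k ω, g k ω = if Y ω = X ω + k then 1 else 0 := by
    intro k ω
    simp [hg_def, Set.indicator_apply, hA_def]
  have hg_int : ∀ k, Integrable (g k) P := fun k =>
    (integrable_const (1 : ℝ)).indicator (hA k)
  set pmf : ℕ → Ω → ℝ := fun k ω => (((d * X ω + d + 1).choose k : ℕ) : ℝ) * q' ^ k *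
      (1 - q') ^ (d * X ω + d + 1 - k) with hpmf_def
  -- conditional expectation of the sum of indicators
  have hall : ∀ᵐ ω ∂P, ∀ k, (P[g k | F n]) ω = pmf k ω := ae_all_iff.2 hbinom
  set S : Ω → ℝ := fun ω => ∑ k ∈ Finset.range (K + 1), g k ω with hS_def
  have hS_int : Integrable S P := integrable_finset_sum _ fun k _ => hg_int k
  have hS_cond : P[S | F n] =ᵐ[P] fun ω => ∑ k ∈ Finset.range (K + 1), pmf k ω := by
    have h1 : P[S | F n] =ᵐ[P] ∑ k ∈ Finset.range (K + 1), P[g k | F n] := by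
      have := condExp_finsetSum (μ := P) (m := F n) (s := Finset.range (K + 1))
        (f := g) (fun k _ => hg_int k)
      refine EventuallyEq.trans (condExp_congr_ae ?_) this
      filter_upwards with ω
      simp [hS_def, Finset.sum_apply]
    refine h1.trans ?_
    filter_upwards [hall] with ω hω
    simp only [Finset.sum_apply]
    exact Finset.sum_congr rfl fun k _ => hω k
  have hS_one : P[S | F n] =ᵐ[P] fun _ => (1 : ℝ) := by
    refine hS_cond.trans ?_
    filter_upwards [hB] with ω hω
    have hle : d * X ω + d + 1 ≤ K := by
      have := Nat.mul_le_mul_left d hω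
      omega
    exact ean_binom_sum (d * X ω + d + 1) K hle q'
  -- S takes values in {0,1}
  have hS01 : ∀ ω, S ω = 0 ∨ S ω = 1 := by
    intro ω
    by_cases h : ∃ k ∈ Finset.range (K + 1), Y ω = X ω + k
    · obtain ⟨k0, hk0mem, hk0⟩ := h
      right
      show ∑ k ∈ Finset.range (K + 1), g k ω = 1
      rw [Finset.sum_eq_single_of_mem k0 hk0mem]
      · rw [hg01]; simp [hk0]
      · intro j _ hj
        rw [hg01]
        have : Y ω ≠ X ω + j := by omega
        simp [this]
    · left
      show ∑ k ∈ Finset.range (K + 1), g k ω = 0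
      refine Finset.sum_eq_zero fun k hk => ?_
      rw [hg01]
      have : Y ω ≠ X ω + k := fun hc => h ⟨k, hk, hc⟩
      simp [this]
  have hS_le : ∀ ω, S ω ≤ 1 := fun ω => by rcases hS01 ω with h | h <;> simp [h]
  have hS_nonneg : ∀ ω, 0 ≤ S ω := fun ω => by rcases hS01 ω with h | h <;> simp [h]
  have hS_integral : ∫ ω, S ω ∂P = 1 := by
    rw [← integral_condExp hm (f := S)]
    rw [integral_congr_ae hS_one]
    simp
  have hS_ae_one : S =ᵐ[P] fun _ => (1 : ℝ) := by
    have hnn : 0 ≤ (fun ω => 1 - S ω) := fun ω => by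
      have := hS_le ω; simp; linarith
    have hint : Integrable (fun ω => 1 - S ω) P := (integrable_const 1).sub hS_int
    have hzero : ∫ ω, (1 - S ω) ∂P = 0 := by
      rw [integral_sub (integrable_const 1) hS_int]
      simp [hS_integral]
    have := (integral_eq_zero_iff_of_nonneg hnn hint).1 hzero
    filter_upwards [this] with ω hω
    have : 1 - S ω = 0 := hω
    linarith
  have hEx : ∀ᵐ ω ∂P, ∃ k ∈ Finset.range (K + 1), Y ω = X ω + k := by
    filter_upwards [hS_ae_one] with ω hω
    by_contra h
    push_neg at h
    have : S ω = 0 := by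
      show ∑ k ∈ Finset.range (K + 1), g k ω = 0
      refine Finset.sum_eq_zero fun k hk => ?_
      rw [hg01]
      simp [h k hk]
    rw [hω] at this
    norm_num at this
  constructor
  · filter_upwards [hEx, hB] with ω ⟨k, hkmem, hk⟩ hω
    have h1 := Finset.mem_range.1 hkmem
    have h2 : (d + 1) * B = d * B + B := by ring
    omega
  · -- the conditional expectation computation
    set f : ℕ → Ω → ℝ := fun k ω => (X ω : ℝ) + k with hf_def
    have hf_sm : ∀ k, StronglyMeasurable[F n] (f k) := fun k =>
      ((measurable_from_top.comp hX).add measurable_const).stronglyMeasurable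
    have hg_meas : ∀ k, Measurable (g k) := fun k => measurable_const.indicator (hA k)
    have hfg_int : ∀ k, Integrable (f k * g k) P := by
      intro k
      refine Integrable.mono' (integrable_const ((B : ℝ) + k)) ?_ ?_
      · exact (((measurable_from_top.comp hXm).add measurable_const).mul
          (hg_meas k)).aestronglyMeasurable
      · filter_upwards [hB] with ω hω
        have h0 : (0:ℝ) ≤ f k ω := by positivity
        have h1 : 0 ≤ g k ω ∧ g k ω ≤ 1 := by
          rw [hg01]; split <;> norm_num
        have : ‖f k ω * g k ω‖ = f k ω * g k ω := by
          rw [Real.norm_eq_abs, abs_of_nonneg (mul_nonneg h0 h1.1)]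
        rw [Pi.mul_apply, this]
        have hXB : (X ω : ℝ) ≤ B := by exact_mod_cast hω
        have hfB : f k ω ≤ (B : ℝ) + k := by
          rw [hf_def]
          exact add_le_add_left hXB _
        calc f k ω * g k ω ≤ f k ω * 1 := by nlinarith [h1.1, h1.2, h0]
          _ = f k ω := mul_one _
          _ ≤ (B : ℝ) + k := hfB
    have hpull : ∀ k, P[f k * g k | F n] =ᵐ[P] fun ω => f k ω * pmf k ω := by
      intro k
      refine (condExp_mul_of_stronglyMeasurable_left (hf_sm k) (hfg_int k) (hg_int k)).trans ?_
      filter_upwards [hbinom k] with ω hω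
      rw [Pi.mul_apply, hω]
    have hdecomp : (fun ω => (Y ω : ℝ)) =ᵐ[P]
        fun ω => ∑ k ∈ Finset.range (K + 1), f k ω * g k ω := by
      filter_upwards [hEx] with ω hω
      obtain ⟨k0, hk0mem, hk0⟩ := hω
      rw [Finset.sum_eq_single_of_mem k0 hk0mem]
      · rw [hg01, if_pos hk0, mul_one, hf_def, hk0]
        push_cast
        ring
      · intro j _ hj
        rw [hg01]
        have : Y ω ≠ X ω + j := by omega
        simp [this]
    refine (condExp_congr_ae hdecomp).trans ?_
    have h2 : P[(fun ω => ∑ k ∈ Finset.range (K + 1), f k ω * g k ω) | F n] =ᵐ[P]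
        ∑ k ∈ Finset.range (K + 1), P[f k * g k | F n] := by
      refine EventuallyEq.trans (condExp_congr_ae ?_)
        (condExp_finsetSum (fun k _ => hfg_int k) _)
      filter_upwards with ω
      simp [Finset.sum_apply]
    refine h2.trans ?_
    have hpull_all : ∀ᵐ ω ∂P, ∀ k, (P[f k * g k | F n]) ω = f k ω * pmf k ω :=
      ae_all_iff.2 hpull
    filter_upwards [hB, hpull_all] with ω hω hall2
    rw [Finset.sum_apply]
    rw [Finset.sum_congr rfl fun k _ => hall2 k]
    have hle : d * X ω + d + 1 ≤ K := by
      have := Nat.mul_le_mul_left d hω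
      omega
    have hsum := ean_binom_sum (d * X ω + d + 1) K hle q'
    have hmean := ean_binom_mean (d * X ω + d + 1) K hle q'
    have expand : ∀ k, f k ω * pmf k ω =
        (X ω : ℝ) * (((d * X ω + d + 1).choose k : ℕ) : ℝ) * q' ^ k *
          (1 - q') ^ (d * X ω + d + 1 - k)
        + (k : ℝ) * ((((d * X ω + d + 1).choose k : ℕ) : ℝ) * q' ^ k *
          (1 - q') ^ (d * X ω + d + 1 - k)) := by
      intro k
      rw [hf_def, hpmf_def]
      ring
    rw [Finset.sum_congr rfl fun k _ => expand k, Finset.sum_add_distrib]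
    have e1 : ∑ k ∈ Finset.range (K + 1),
        (X ω : ℝ) * (((d * X ω + d + 1).choose k : ℕ) : ℝ) * q' ^ k *
          (1 - q') ^ (d * X ω + d + 1 - k) = (X ω : ℝ) := by
      rw [Finset.sum_congr rfl (fun k _ => by
        ring : ∀ k ∈ Finset.range (K + 1),
          (X ω : ℝ) * (((d * X ω + d + 1).choose k : ℕ) : ℝ) * q' ^ k *
            (1 - q') ^ (d * X ω + d + 1 - k)
          = (X ω : ℝ) * ((((d * X ω + d + 1).choose k : ℕ) : ℝ) * q' ^ k *
            (1 - q') ^ (d * X ω + d + 1 - k)))]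
      rw [← Finset.mul_sum, hsum, mul_one]
    rw [e1, hmean]
    push_cast
    ring

def eanB (d : ℕ) : ℕ → ℕ
  | 0 => 0
  | n + 1 => (d + 1) * eanB d n + d + 1

/-- Let `d ≥ 2` and `(q_n)_{n≥1} ⊆ [0,1]`.  Let `(N_n)_{n≥0}` be adapted to a
filtration `(F_n)` with `N_0 = 0`, such that conditionally on `F_n` the increment
`N_{n+1} − N_n` is `Binomial(d·N_n + d + 1, q_{n+1})`-distributed.  Then
`M_n = (N_n + (d+1)/d) · Π_{i=1}^n (1 + d·q_i)⁻¹` is a nonnegative martingale, and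
consequently `N_n · Π_{i=1}^n (1 + d·q_i)⁻¹` converges almost surely to a nonnegative
random variable `ξ`. -/
theorem ean_node_count_martingale (d : ℕ) (hd : 2 ≤ d)
    (q : ℕ → ℝ) (hq : ∀ i, q i ∈ Set.Icc (0 : ℝ) 1)
    {Ω : Type*} {m0 : MeasurableSpace Ω} (P : Measure Ω) [IsProbabilityMeasure P]
    (F : Filtration ℕ m0)
    (N : ℕ → Ω → ℕ)
    (hadapted : ∀ n, Measurable[F n] (N n))
    (hzero : ∀ ω, N 0 ω = 0)
    (hbinom : ∀ n k : ℕ,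
      (P[Set.indicator {ω' | N (n + 1) ω' = N n ω' + k} (1 : Ω → ℝ) | F n]) =ᵐ[P]
        fun ω => (((d * N n ω + d + 1).choose k : ℕ) : ℝ) *
          q (n + 1) ^ k * (1 - q (n + 1)) ^ (d * N n ω + d + 1 - k)) :
    (∀ n ω, 0 ≤ ((N n ω : ℝ) + ((d : ℝ) + 1) / d) *
        ∏ i ∈ Finset.Icc 1 n, (1 + (d : ℝ) * q i)⁻¹) ∧
    Martingale (fun n ω => ((N n ω : ℝ) + ((d : ℝ) + 1) / d) *
        ∏ i ∈ Finset.Icc 1 n, (1 + (d : ℝ) * q i)⁻¹) F P ∧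
    ∃ ξ : Ω → ℝ, (∀ ω, 0 ≤ ξ ω) ∧
      ∀ᵐ ω ∂P, Tendsto (fun n : ℕ =>
          (N n ω : ℝ) * ∏ i ∈ Finset.Icc 1 n, (1 + (d : ℝ) * q i)⁻¹)
        atTop (nhds (ξ ω)) := by
  have hdpos : (0 : ℝ) < d := by exact_mod_cast (by omega : 0 < d)
  have hd0 : (d : ℝ) ≠ 0 := ne_of_gt hdpos
  set c : ℝ := ((d : ℝ) + 1) / d with hc_def
  have hc_pos : 0 < c := by positivity
  have hdc : (d : ℝ) * c = d + 1 := by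
    rw [hc_def]; field_simp
  set Pr : ℕ → ℝ := fun n => ∏ i ∈ Finset.Icc 1 n, (1 + (d : ℝ) * q i)⁻¹ with hPr_def
  have hfac_pos : ∀ i, (0 : ℝ) < 1 + (d : ℝ) * q i := by
    intro i
    have h1 := (hq i).1
    nlinarith
  have hfac_ne : ∀ i, (1 : ℝ) + (d : ℝ) * q i ≠ 0 := fun i => ne_of_gt (hfac_pos i)
  have hPr_pos : ∀ n, 0 < Pr n := by
    intro n
    exact Finset.prod_pos fun i _ => inv_pos.2 (hfac_pos i)
  have hPr_succ : ∀ n, Pr (n + 1) = Pr n * (1 + (d : ℝ) * q (n + 1))⁻¹ := by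
    intro n
    exact Finset.prod_Icc_succ_top (Nat.le_add_left 1 n) _
  have hPr_zero : Pr 0 = 1 := by simp [hPr_def]
  have hNmeas : ∀ n, Measurable (N n) := fun n => (hadapted n).mono (F.le n) le_rfl
  have hbdd : ∀ n, ∀ᵐ ω ∂P, N n ω ≤ eanB d n := by
    intro n
    induction n with
    | zero => filter_upwards with ω; simp [hzero ω, eanB]
    | succ n ih =>
      exact (ean_step P F d (q (n + 1)) (N n) (N (n + 1)) n (hadapted n) (hNmeas (n + 1))
        (eanB d n) ih (hbinom n)).1
  have hcond : ∀ n, P[(fun ω => (N (n + 1) ω : ℝ)) | F n] =ᵐ[P]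
      fun ω => (N n ω : ℝ) + ((d : ℝ) * N n ω + d + 1) * q (n + 1) := fun n =>
    (ean_step P F d (q (n + 1)) (N n) (N (n + 1)) n (hadapted n) (hNmeas (n + 1))
        (eanB d n) (hbdd n) (hbinom n)).2
  have hNint : ∀ n, Integrable (fun ω => (N n ω : ℝ)) P := by
    intro n
    refine Integrable.mono' (integrable_const ((eanB d n : ℕ) : ℝ))
      ((measurable_from_top.comp (hNmeas n)).aestronglyMeasurable) ?_
    filter_upwards [hbdd n] with ω hω
    rw [Real.norm_eq_abs, abs_of_nonneg (by positivity)]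
    exact_mod_cast hω
  set M : ℕ → Ω → ℝ := fun n ω => ((N n ω : ℝ) + c) * Pr n with hM_def
  have hMnonneg : ∀ n ω, 0 ≤ M n ω := by
    intro n ω
    exact mul_nonneg (by positivity) (hPr_pos n).le
  have hMint : ∀ n, Integrable (M n) P := fun n =>
    ((hNint n).add (integrable_const c)).mul_const _
  have hMadp : StronglyAdapted F M := fun n =>
    (((measurable_from_top.comp (hadapted n)).add measurable_const).mul
      measurable_const).stronglyMeasurable
  have hmart : Martingale M F P := by
    refine martingale_nat hMadp hMint fun n => ?_
    have hsmul : M (n + 1) = Pr (n + 1) • ((fun ω => (N (n + 1) ω : ℝ)) + fun _ => c) := by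
      funext ω
      simp only [hM_def, Pi.smul_apply, Pi.add_apply, smul_eq_mul]
      ring
    have e1 : P[M (n + 1) | F n] =ᵐ[P]
        Pr (n + 1) • P[((fun ω => (N (n + 1) ω : ℝ)) + fun _ => c) | F n] := by
      rw [hsmul]; exact condExp_smul _ _ _
    have e2 : P[((fun ω => (N (n + 1) ω : ℝ)) + fun _ => c) | F n] =ᵐ[P]
        P[(fun ω => (N (n + 1) ω : ℝ)) | F n] + P[(fun _ => c) | F n] :=
      condExp_add (hNint (n + 1)) (integrable_const c) _
    have e3 : P[(fun (_ : Ω) => c) | F n] = fun _ => c := condExp_const (F.le n) c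
    refine EventuallyEq.symm ?_
    refine e1.trans ?_
    filter_upwards [e2, hcond n] with ω h2 hcω
    simp only [Pi.smul_apply, smul_eq_mul]
    rw [h2, Pi.add_apply, e3, hcω]
    -- Pr (n+1) * ((N n + (d N n + d + 1) q) + c) = (N n + c) * Pr n
    have halg : (N n ω : ℝ) + ((d : ℝ) * N n ω + d + 1) * q (n + 1) + c
        = (1 + (d : ℝ) * q (n + 1)) * ((N n ω : ℝ) + c) := by
      linear_combination (- q (n + 1)) * hdc
    rw [hPr_succ n, halg, hM_def, mul_assoc, inv_mul_cancel_left₀ (hfac_ne (n + 1))]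
    ring
  have hM0 : ∀ ω, M 0 ω = c := by
    intro ω
    simp [hM_def, hzero ω, hPr_zero]
  have hMint_eq : ∀ n, ∫ ω, M n ω ∂P = c := by
    intro n
    have h0 : P[M n | F 0] =ᵐ[P] M 0 := hmart.condExp_ae_eq (Nat.zero_le n)
    calc ∫ ω, M n ω ∂P = ∫ ω, (P[M n | F 0]) ω ∂P := (integral_condExp (F.le 0)).symm
      _ = ∫ ω, M 0 ω ∂P := integral_congr_ae h0
      _ = c := by
          rw [integral_congr_ae (Filter.Eventually.of_forall hM0)]
          simp
  have hbddL1 : ∀ n, eLpNorm (M n) 1 P ≤ ((Real.toNNReal c : ℝ≥0) : ℝ≥0∞) := by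
    intro n
    rw [eLpNorm_one_eq_lintegral_enorm, ← ofReal_integral_norm_eq_lintegral_enorm (hMint n)]
    have : ∫ ω, ‖M n ω‖ ∂P = c := by
      rw [integral_congr_ae (Filter.Eventually.of_forall fun ω => by
        rw [Real.norm_eq_abs, abs_of_nonneg (hMnonneg n ω)])]
      exact hMint_eq n
    rw [this]
    exact le_rfl
  have hconv := hmart.submartingale.ae_tendsto_limitProcess hbddL1
  -- deterministic limit of Pr
  have hPr_anti : Antitone Pr := by
    refine antitone_nat_of_succ_le fun n => ?_
    rw [hPr_succ n]
    have h1 : (1 + (d : ℝ) * q (n + 1))⁻¹ ≤ 1 := by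
      rw [inv_le_one_iff₀]
      right
      have := (hq (n + 1)).1
      nlinarith
    nlinarith [hPr_pos n, (inv_pos.2 (hfac_pos (n + 1)))]
  have hPr_bdd : BddBelow (Set.range Pr) := ⟨0, by rintro x ⟨n, rfl⟩; exact (hPr_pos n).le⟩
  have hPr_tend : Tendsto Pr atTop (nhds (⨅ n, Pr n)) :=
    tendsto_atTop_ciInf hPr_anti hPr_bdd
  set p : ℝ := ⨅ n, Pr n with hp_def
  set L : Ω → ℝ := F.limitProcess M P with hL_def
  refine ⟨fun n ω => hMnonneg n ω, hmart, ⟨fun ω => max (L ω - c * p) 0,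
    fun ω => le_max_right _ _, ?_⟩⟩
  filter_upwards [hconv] with ω hω
  have h1 : Tendsto (fun n => M n ω - c * Pr n) atTop (nhds (L ω - c * p)) :=
    hω.sub (hPr_tend.const_mul c)
  have h2 : (fun n => M n ω - c * Pr n) = fun n => (N n ω : ℝ) * Pr n := by
    funext n
    simp only [hM_def]
    ring
  rw [h2] at h1
  have hlim_nonneg : 0 ≤ L ω - c * p :=
    le_of_tendsto_of_tendsto' tendsto_const_nhds h1
      (fun n => mul_nonneg (by positivity) (hPr_pos n).le)
  rw [show max (L ω - c * p) 0 = L ω - c * p from max_eq_left hlim_nonneg]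
  exact h1
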